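/- Let p ≥ 2 and let A be a nonnegative symmetric n×n real matrix all of whose row sums are equal to d. Then max { xᵀAx : x ∈ ℝⁿ, ‖x‖_p = 1 } = n^{−2/p} · (nd), i.e., the p-spectral radius of A equals n^{−2/p} times the sum of all entries of A. -/

import Mathlib

/-- For a nonnegative symmetric regular matrix (all row sums d)
and p ≥ 2, the p-spectral radius equals n^{-2/p}·(nd). -/
theorem stmt_16 (n : ℕ) (hn : 0 < n) (p : ℝ) (hp : 2 ≤ p)
    (A : Matrix (Fin n) (Fin n) ℝ) (hsym : A.IsSymm)
    (hnn : ∀ i j, 0 ≤ A i j) (d : ℝ) (hreg : ∀ i, ∑ j, A i j = d) :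
    sSup {t : ℝ | ∃ x : Fin n → ℝ, (∑ i, |x i| ^ p) = 1 ∧
        t = ∑ i, ∑ j, A i j * x i * x j} =
      (n : ℝ) ^ (-(2 / p)) * ((n : ℝ) * d) := by
  have hp0 : (0:ℝ) < p := by linarith
  have hn0 : (0:ℝ) < (n:ℝ) := by exact_mod_cast hn
  have hcol : ∀ j, ∑ i, A i j = d := by
    intro j
    rw [← hreg j]
    exact Finset.sum_congr rfl fun i _ => by rw [← hsym.apply i j]
  have hd0 : 0 ≤ d := by
    rw [← hreg ⟨0, hn⟩]; exact Finset.sum_nonneg fun j _ => hnn _ _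
  apply IsGreatest.csSup_eq
  constructor
  · -- membership: constant vector
    refine ⟨fun _ => (n:ℝ) ^ (-(1/p)), ?_, ?_⟩
    · have habs : |(n:ℝ) ^ (-(1/p))| = (n:ℝ) ^ (-(1/p)) :=
        abs_of_pos (Real.rpow_pos_of_pos hn0 _)
      simp only [habs, Finset.sum_const, Finset.card_univ, Fintype.card_fin, nsmul_eq_mul]
      rw [← Real.rpow_mul hn0.le]
      have : (-(1/p)) * p = -1 := by field_simp
      rw [this, Real.rpow_neg_one, mul_inv_cancel₀ hn0.ne']
    · have hsq : (n:ℝ) ^ (-(1/p)) * (n:ℝ) ^ (-(1/p)) = (n:ℝ) ^ (-(2/p)) := by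
        rw [← Real.rpow_add hn0]; ring_nf
      have h3 : ∀ i j : Fin n,
          A i j * (n:ℝ) ^ (-(1/p)) * (n:ℝ) ^ (-(1/p)) = A i j * (n:ℝ) ^ (-(2/p)) :=
        fun i j => by rw [mul_assoc, hsq]
      simp only [h3, ← Finset.sum_mul, hreg, Finset.sum_const, Finset.card_univ,
        Fintype.card_fin, nsmul_eq_mul]
      ring
  · -- upper bound
    rintro t ⟨x, hx, rfl⟩
    have key : ∑ i, (x i)^2 ≤ (n:ℝ) ^ (1 - 2/p) := by
      have hh := Real.inner_le_weight_mul_Lp_of_nonneg (Finset.univ : Finset (Fin n))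
        (p := p/2) (by linarith) (fun _ => (1:ℝ)) (fun i => (x i)^2)
        (fun _ => zero_le_one) (fun i => sq_nonneg _)
      simp only [one_mul, Finset.sum_const, Finset.card_univ, Fintype.card_fin,
        nsmul_eq_mul, mul_one] at hh
      have h2 : ∀ i : Fin n, ((x i)^2) ^ (p/2) = |x i| ^ p := by
        intro i
        rw [← sq_abs, ← Real.rpow_natCast |x i| 2, ← Real.rpow_mul (abs_nonneg _)]
        congr 1
        field_simp
        norm_num
      simp only [h2, hx, Real.one_rpow, mul_one] at hh
      have : (p/2)⁻¹ = 2/p := by rw [inv_div]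
      rwa [this] at hh
    calc ∑ i, ∑ j, A i j * x i * x j
        ≤ ∑ i, ∑ j, A i j * (((x i)^2 + (x j)^2)/2) := by
          apply Finset.sum_le_sum; intro i _
          apply Finset.sum_le_sum; intro j _
          rw [mul_assoc]
          apply mul_le_mul_of_nonneg_left _ (hnn i j)
          nlinarith [sq_nonneg (x i - x j)]
      _ = d * ∑ i, (x i)^2 := by
          have : ∀ i j, A i j * (((x i)^2 + (x j)^2)/2)
              = A i j * (x i)^2 / 2 + A i j * (x j)^2 / 2 := fun i j => by ring
          simp only [this, Finset.sum_add_distrib]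
          rw [Finset.sum_comm (f := fun i j => A i j * (x j)^2 / 2)]
          simp only [← Finset.sum_div, ← Finset.sum_mul]
          simp only [hreg, hcol]
          rw [← Finset.mul_sum]
          ring
      _ ≤ d * (n:ℝ) ^ (1 - 2/p) := mul_le_mul_of_nonneg_left key hd0
      _ = (n:ℝ) ^ (-(2/p)) * ((n:ℝ) * d) := by
          rw [Real.rpow_sub hn0, Real.rpow_one, Real.rpow_neg hn0.le, div_eq_mul_inv]
          ring
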